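/- arXiv:2112.05965 — 2 statements merged into one kernel-verified Lean document; each statement's English description precedes it below -/
import Mathlib

section
/- Let ξ ∈ ℝⁿ, let γ : [0,∞) → [0,∞) be strictly increasing with γ(0) = 0, let x : ℕ → ℝⁿ be a sequence, and let V : ℕ → ℝ satisfy V(k) ≥ 0 and V(k+1) ≤ V(k) − γ(‖x(k) − ξ‖) for all k ∈ ℕ. Then x(k) → ξ as k → ∞. -/
/-- If `γ : [0,∞) → [0,∞)` is strictly increasing with `γ 0 = 0`,
`x : ℕ → ℝⁿ`, and `V : ℕ → ℝ` satisfies `V k ≥ 0` and `V (k+1) ≤ V k - γ ‖x k - ξ‖`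
for all `k`, then `x k → ξ`. -/
theorem stmt_6 {n : ℕ} (ξ : EuclideanSpace ℝ (Fin n))
    (γ : ℝ → ℝ) (hγmono : StrictMonoOn γ (Set.Ici 0))
    (hγnonneg : ∀ t, 0 ≤ t → 0 ≤ γ t) (hγ0 : γ 0 = 0)
    (x : ℕ → EuclideanSpace ℝ (Fin n)) (V : ℕ → ℝ)
    (hV : ∀ k, 0 ≤ V k) (hdec : ∀ k, V (k + 1) ≤ V k - γ ‖x k - ξ‖) :
    Filter.Tendsto x Filter.atTop (nhds ξ) := by
  -- V is antitone and bounded below, so it converges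
  have hanti : Antitone V := antitone_nat_of_succ_le fun k => by
    have := hdec k
    have := hγnonneg _ (norm_nonneg (x k - ξ))
    linarith
  have hL := tendsto_atTop_ciInf hanti ⟨0, fun y ⟨k, hk⟩ => hk ▸ hV k⟩
  have hdiff : Filter.Tendsto (fun k => V k - V (k + 1)) Filter.atTop (nhds 0) := by
    have : Filter.Tendsto (fun k => V (k + 1)) Filter.atTop (nhds (⨅ i, V i)) :=
      hL.comp (Filter.tendsto_add_atTop_nat 1)
    simpa using hL.sub this
  -- γ‖x k - ξ‖ → 0 by squeeze
  have hγto : Filter.Tendsto (fun k => γ ‖x k - ξ‖) Filter.atTop (nhds 0) := by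
    refine squeeze_zero (fun k => hγnonneg _ (norm_nonneg _)) (fun k => ?_) hdiff
    have := hdec k; linarith
  -- conclude ‖x k - ξ‖ → 0
  rw [Metric.tendsto_atTop]
  intro ε hε
  have hγε : 0 < γ ε := by
    have := hγmono (Set.mem_Ici.2 le_rfl) (Set.mem_Ici.2 hε.le) hε
    rwa [hγ0] at this
  obtain ⟨N, hN⟩ := (Metric.tendsto_atTop.1 hγto) (γ ε) hγε
  refine ⟨N, fun k hk => ?_⟩
  have h1 := hN k hk
  rw [Real.dist_eq, sub_zero, abs_of_nonneg (hγnonneg _ (norm_nonneg _))] at h1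
  rw [dist_eq_norm]
  by_contra hc
  push_neg at hc
  have h2 : γ ε ≤ γ ‖x k - ξ‖ :=
    hγmono.monotoneOn (Set.mem_Ici.2 hε.le) (Set.mem_Ici.2 (norm_nonneg _)) hc
  linarith
end

section
/- Let Q be a real symmetric positive definite n × n matrix, ξ ∈ ℝⁿ, x : ℕ → ℝⁿ a sequence, and V : ℕ → ℝ a sequence with V(k) ≥ 0 for all k such that V(k+1) − V(k) ≤ −(x(k) − ξ)ᵀ Q (x(k) − ξ) for all k ∈ ℕ. Then x(k) → ξ as k → ∞. -/
open Matrix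

lemma quad_lower_bound {n : ℕ} (Q : Matrix (Fin n) (Fin n) ℝ) (hQpd : Q.PosDef) :
    ∃ c > 0, ∀ v : Fin n → ℝ, c * ‖v‖ ^ 2 ≤ v ⬝ᵥ Q.mulVec v := by
  rcases Nat.eq_zero_or_pos n with hn | hn
  · refine ⟨1, one_pos, fun v => ?_⟩
    subst hn
    have hv : v = 0 := Subsingleton.elim _ _
    rw [hv, norm_zero]
    simp
  · have hne : (Metric.sphere (0 : Fin n → ℝ) 1).Nonempty := by
      have : Nontrivial (Fin n → ℝ) := by
        have : Nonempty (Fin n) := ⟨⟨0, hn⟩⟩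
        infer_instance
      exact NormedSpace.sphere_nonempty.2 zero_le_one
    have hcont : Continuous fun v : Fin n → ℝ => v ⬝ᵥ Q.mulVec v := by
      simp only [dotProduct, Matrix.mulVec, dotProduct]
      exact continuous_finset_sum _ fun i _ => (continuous_apply i).mul
        (continuous_finset_sum _ fun j _ => continuous_const.mul (continuous_apply j))
    obtain ⟨u, hu, hmin'⟩ := (isCompact_sphere (0 : Fin n → ℝ) 1).exists_isMinOn hne
      hcont.continuousOn
    have hmin := isMinOn_iff.mp hmin'
    have hu1 : ‖u‖ = 1 := by simpa using mem_sphere_zero_iff_norm.mp hu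
    have hu0 : u ≠ 0 := by intro h; simp [h] at hu1
    refine ⟨u ⬝ᵥ Q.mulVec u, hQpd.dotProduct_mulVec_pos hu0, fun v => ?_⟩
    rcases eq_or_ne v 0 with rfl | hv0
    · simp
    · have hnv : (0:ℝ) < ‖v‖ := norm_pos_iff.mpr hv0
      set w := ‖v‖⁻¹ • v with hw
      have hwS : w ∈ Metric.sphere (0 : Fin n → ℝ) 1 := by
        simp [hw, mem_sphere_zero_iff_norm, norm_smul, abs_of_pos (inv_pos.mpr hnv),
          inv_mul_cancel₀ hnv.ne']
      have : u ⬝ᵥ Q.mulVec u ≤ w ⬝ᵥ Q.mulVec w := hmin w hwS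
      have hwq : w ⬝ᵥ Q.mulVec w = ‖v‖⁻¹ * (‖v‖⁻¹ * (v ⬝ᵥ Q.mulVec v)) := by
        rw [hw, smul_dotProduct, mulVec_smul, dotProduct_smul]
        simp [smul_eq_mul]
      calc (u ⬝ᵥ Q.mulVec u) * ‖v‖ ^ 2 ≤ (w ⬝ᵥ Q.mulVec w) * ‖v‖ ^ 2 :=
            mul_le_mul_of_nonneg_right this (by positivity)
        _ = v ⬝ᵥ Q.mulVec v := by
            rw [hwq]
            field_simp

/-- Let `Q` be a real symmetric positive definite `n × n` matrix, `ξ ∈ ℝⁿ`,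
`x : ℕ → ℝⁿ`, and `V : ℕ → ℝ` with `V k ≥ 0` and
`V (k+1) - V k ≤ -(x k - ξ)ᵀ Q (x k - ξ)` for all `k`. Then `x k → ξ`. -/
theorem stmt_7 {n : ℕ} (Q : Matrix (Fin n) (Fin n) ℝ) (hQsymm : Q.IsSymm) (hQpd : Q.PosDef)
    (ξ : Fin n → ℝ) (x : ℕ → Fin n → ℝ) (V : ℕ → ℝ) (hV : ∀ k, 0 ≤ V k)
    (hdec : ∀ k, V (k + 1) - V k ≤ -((x k - ξ) ⬝ᵥ Q.mulVec (x k - ξ))) :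
    Filter.Tendsto x Filter.atTop (nhds ξ) := by
  obtain ⟨c, hc, hcq⟩ := quad_lower_bound Q hQpd
  set f : ℕ → ℝ := fun k => (x k - ξ) ⬝ᵥ Q.mulVec (x k - ξ) with hf
  have hf0 : ∀ k, 0 ≤ f k := by
    intro k
    rcases eq_or_ne (x k - ξ) 0 with h | h
    · simp [hf, h]
    · exact (hQpd.dotProduct_mulVec_pos h).le
  have hsum : Summable f := by
    apply summable_of_sum_range_le hf0 (c := V 0)
    intro N
    have key : ∀ k, f k ≤ V k - V (k + 1) := fun k => by linarith [hdec k]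
    calc ∑ i ∈ Finset.range N, f i ≤ ∑ i ∈ Finset.range N, (V i - V (i + 1)) :=
          Finset.sum_le_sum fun i _ => key i
      _ = V 0 - V N := Finset.sum_range_sub' V N
      _ ≤ V 0 := by linarith [hV N]
  have hft : Filter.Tendsto f Filter.atTop (nhds 0) := hsum.tendsto_atTop_zero
  have hg : Filter.Tendsto (fun k => c⁻¹ * f k) Filter.atTop (nhds 0) := by
    have h := hft.const_mul c⁻¹
    rwa [mul_zero] at h
  have hsq : Filter.Tendsto (fun k => ‖x k - ξ‖ ^ 2) Filter.atTop (nhds 0) := by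
    refine squeeze_zero (fun k => sq_nonneg _) (fun k => ?_) hg
    rw [le_inv_mul_iff₀ hc]
    exact hcq _
  have hnt : Filter.Tendsto (fun k => ‖x k - ξ‖) Filter.atTop (nhds 0) := by
    have h1 : Filter.Tendsto (fun k => Real.sqrt (‖x k - ξ‖ ^ 2)) Filter.atTop
        (nhds (Real.sqrt 0)) := (Real.continuous_sqrt.tendsto 0).comp hsq
    rw [Real.sqrt_zero] at h1
    exact h1.congr fun k => Real.sqrt_sq (norm_nonneg _)
  exact tendsto_iff_norm_sub_tendsto_zero.mpr hnt
end
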